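/- Let I be a countable index set, (V_i)_{i∈I} and (H_i)_{i∈I} complex Hilbert spaces with V_i continuously embedded in H_i, uniformly in i, and set V = ⊕_{i∈I} V_i, H = ⊕_{i∈I} H_i (so V is continuously embedded in H). Let a_{ij} : V_j × V_i → ℂ be sesquilinear mappings such that the form a(ψ,ψ') := ∑_{i,j∈I} a_{ij}(ψ_j,ψ'_i) is a well-defined continuous sesquilinear form on V. Assume: (i) for all i ≠ j there are α_{ij} < 0 and ω_{ij} ∈ ℝ with |a_{ij}(ψ,ψ')| ≤ −α_{ij}‖ψ‖_{V_j}‖ψ'‖_{V_i} + ω_{ij}‖ψ‖_{H_j}‖ψ'‖_{H_i}; (ii) for all i there are α_{ii} > 0 and ω_{ii} ∈ ℝ with Re a_{ii}(ψ,ψ) + ω_{ii}‖ψ‖²_{H_i} ≥ α_{ii}‖ψ‖²_{V_i}; (iii) the matrix A = (α_{ij}) defines a bounded operator on ℓ²(I) with Re (Av|v) ≥ α‖v‖²_{ℓ²(I)} for some α > 0 and all v; (iv) the matrix Ω = (ω_{ij}) defines a bounded operator on ℓ²(I). Then the form a is H-elliptic and satisfies Re a(ψ,ψ) + ‖Ω‖_{L(ℓ²(I))}·‖ψ‖²_H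 ≥ α‖ψ‖²_V for all ψ ∈ V. -/

import Mathlib

open scoped ENNReal


/-- Let `(V i)`, `(H i)` be complex Hilbert spaces with `V i` embedded
in `H i` via injective bounded maps `J i`, uniformly in `i`, and form the direct sums
`lp V 2` and `lp H 2` (so that the `H`-norm of `ψ ∈ lp V 2` is `(∑ i, ‖J i (ψ i)‖²)^½`).
Let `a i j : V j × V i → ℂ` be sesquilinear mappings whose sum defines a continuous
sesquilinear form on `lp V 2`.  Assume (i) for `i ≠ j` there are `α i j < 0`, `ω i j ∈ ℝ`
with `‖a i j x y‖ ≤ -(α i j) ‖x‖_{V j} ‖y‖_{V i} + ω i j ‖x‖_{H j} ‖y‖_{H i}`;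
(ii) for each `i` there are `α i i > 0`, `ω i i ∈ ℝ` with
`Re (a i i x x) + ω i i ‖x‖²_{H i} ≥ α i i ‖x‖²_{V i}`;
(iii) the matrix `(α i j)` defines a bounded operator `T` on real `ℓ²(I)` with
`Re (T v | v) ≥ c ‖v‖²`, `c > 0`; (iv) the matrix `(ω i j)` defines a bounded operator `W`
on real `ℓ²(I)`.  Then the form is `H`-elliptic:
`Re a(ψ,ψ) + ‖W‖ ‖ψ‖²_H ≥ c ‖ψ‖²_V` for all `ψ`. -/
theorem stmt11 {I : Type*} [Countable I]
    {V : I → Type*} [∀ i, NormedAddCommGroup (V i)] [∀ i, InnerProductSpace ℂ (V i)]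
    [∀ i, CompleteSpace (V i)]
    {H : I → Type*} [∀ i, NormedAddCommGroup (H i)] [∀ i, InnerProductSpace ℂ (H i)]
    [∀ i, CompleteSpace (H i)]
    (J : ∀ i, V i →L[ℂ] H i) (hJinj : ∀ i, Function.Injective (J i))
    (cJ : ℝ) (hJunif : ∀ i (x : V i), ‖J i x‖ ≤ cJ * ‖x‖)
    (a : ∀ i j, V j →ₗ[ℂ] V i →ₗ⋆[ℂ] ℂ)
    (hsum : ∀ ψ ψ' : lp V 2,
      Summable (fun p : I × I => a p.1 p.2 (ψ p.2) (ψ' p.1)))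
    (hcont : ∃ C : ℝ, ∀ ψ ψ' : lp V 2,
      ‖∑' p : I × I, a p.1 p.2 (ψ p.2) (ψ' p.1)‖ ≤ C * ‖ψ‖ * ‖ψ'‖)
    (α ω : I → I → ℝ)
    (hαoff : ∀ i j, i ≠ j → α i j < 0)
    (hoff : ∀ i j, i ≠ j → ∀ (x : V j) (y : V i),
      ‖a i j x y‖ ≤ -(α i j) * ‖x‖ * ‖y‖ + ω i j * ‖J j x‖ * ‖J i y‖)
    (hαdiag : ∀ i, 0 < α i i)
    (hdiag : ∀ i (x : V i),
      α i i * ‖x‖ ^ 2 ≤ (a i i x x).re + ω i i * ‖J i x‖ ^ 2)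
    (T : lp (fun _ : I => ℝ) 2 →L[ℝ] lp (fun _ : I => ℝ) 2)
    (hT : ∀ (x : lp (fun _ : I => ℝ) 2) (i : I), HasSum (fun j => α i j * x j) (T x i))
    (c : ℝ) (hc : 0 < c)
    (hTcoer : ∀ x : lp (fun _ : I => ℝ) 2, c * ‖x‖ ^ 2 ≤ (inner ℝ (T x) x : ℝ))
    (W : lp (fun _ : I => ℝ) 2 →L[ℝ] lp (fun _ : I => ℝ) 2)
    (hW : ∀ (x : lp (fun _ : I => ℝ) 2) (i : I), HasSum (fun j => ω i j * x j) (W x i)) :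
    ∀ ψ : lp V 2,
      c * ‖ψ‖ ^ 2 ≤
        (∑' p : I × I, a p.1 p.2 (ψ p.2) (ψ p.1)).re +
          ‖W‖ * ∑' i : I, ‖J i (ψ i)‖ ^ 2 := by
  intro ψ
  classical
  have h2 : (0:ℝ) < (2 : ℝ≥0∞).toReal := by norm_num
  -- summability of ‖ψ i‖^2
  have h2e : (2:ℝ≥0∞).toReal = 2 := by norm_num
  have hpow : ∀ x : ℝ, x ^ ((2:ℝ≥0∞).toReal) = x ^ 2 := fun x => by
    rw [h2e]; exact Real.rpow_two x
  have hψs2 : Summable (fun i => ‖ψ i‖ ^ 2) := by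
    have := (lp.memℓp ψ).summable h2
    simpa [hpow] using this
  have hJbd : ∀ i, ‖J i (ψ i)‖ ^ 2 ≤ cJ ^ 2 * ‖ψ i‖ ^ 2 := by
    intro i
    have h1 := hJunif i (ψ i)
    have h0 : (0:ℝ) ≤ ‖J i (ψ i)‖ := norm_nonneg _
    nlinarith [norm_nonneg (ψ i)]
  have hJs2 : Summable (fun i => ‖J i (ψ i)‖ ^ 2) :=
    Summable.of_nonneg_of_le (fun i => by positivity) hJbd (hψs2.mul_left _)
  -- the ℓ² vectors of norms
  have hvmem : Memℓp (fun i => ‖ψ i‖) (2 : ℝ≥0∞) := by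
    apply memℓp_gen
    simpa [hpow, Real.norm_eq_abs, abs_of_nonneg (norm_nonneg _)] using hψs2
  have hwmem : Memℓp (fun i => ‖J i (ψ i)‖) (2 : ℝ≥0∞) := by
    apply memℓp_gen
    simpa [hpow, Real.norm_eq_abs, abs_of_nonneg (norm_nonneg _)] using hJs2
  set v : lp (fun _ : I => ℝ) 2 := ⟨fun i => ‖ψ i‖, hvmem⟩ with hv
  set w : lp (fun _ : I => ℝ) 2 := ⟨fun i => ‖J i (ψ i)‖, hwmem⟩ with hw
  have hvc : ∀ i, v i = ‖ψ i‖ := fun i => rfl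
  have hwc : ∀ i, w i = ‖J i (ψ i)‖ := fun i => rfl
  -- norms
  have hvnorm : ‖v‖ ^ 2 = ‖ψ‖ ^ 2 := by
    have h1 := lp.norm_rpow_eq_tsum h2 v
    have h3 := lp.norm_rpow_eq_tsum h2 ψ
    have e1 : (∑' i, ‖v i‖ ^ (2:ℝ≥0∞).toReal) = ∑' i, ‖ψ i‖ ^ (2:ℝ≥0∞).toReal := by
      congr 1; funext i
      rw [hvc i, Real.norm_eq_abs, abs_of_nonneg (norm_nonneg _)]
    have : ‖v‖ ^ ((2:ℝ≥0∞).toReal) = ‖ψ‖ ^ ((2:ℝ≥0∞).toReal) := by rw [h1, h3, e1]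
    rw [hpow, hpow] at this
    exact this
  have hwnorm : ‖w‖ ^ 2 = ∑' i, ‖J i (ψ i)‖ ^ 2 := by
    have h1 := lp.norm_rpow_eq_tsum h2 w
    rw [hpow] at h1
    rw [h1]
    congr 1; funext i
    rw [hwc i, Real.norm_eq_abs, abs_of_nonneg (norm_nonneg _), hpow]
  -- re of the double sum, fiberwise
  set S : ℂ := ∑' p : I × I, a p.1 p.2 (ψ p.2) (ψ p.1) with hSdef
  set g : I → ℝ := fun i => (∑' j, a i j (ψ j) (ψ i)).re with hg
  have hgi : ∀ i, HasSum (fun j => (a i j (ψ j) (ψ i)).re) (g i) := fun i =>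
    Complex.hasSum_re ((hsum ψ ψ).prod_factor i).hasSum
  have hS : HasSum g S.re :=
    HasSum.prod_fiberwise (Complex.hasSum_re (hsum ψ ψ).hasSum) hgi
  -- row-wise lower bounds
  have hTv : ∀ i, HasSum (fun j => α i j * ‖ψ j‖ * ‖ψ i‖) (T v i * ‖ψ i‖) := by
    intro i
    have := (hT v i).mul_right (‖ψ i‖)
    simpa [hvc, mul_assoc] using this
  have hWw : ∀ i, HasSum (fun j => ω i j * ‖J j (ψ j)‖ * ‖J i (ψ i)‖)
      (W w i * ‖J i (ψ i)‖) := by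
    intro i
    have := (hW w i).mul_right (‖J i (ψ i)‖)
    simpa [hwc, mul_assoc] using this
  have hrow : ∀ i, T v i * ‖ψ i‖ - W w i * ‖J i (ψ i)‖ ≤ g i := by
    intro i
    refine hasSum_le ?_ ((hTv i).sub (hWw i)) (hgi i)
    intro j
    rcases eq_or_ne i j with rfl | hij
    · have := hdiag i (ψ i)
      have h1 : ‖ψ i‖ ^ 2 = ‖ψ i‖ * ‖ψ i‖ := sq (‖ψ i‖) ▸ (sq (‖ψ i‖)).symm ▸ by ring
      nlinarith [norm_nonneg (ψ i), norm_nonneg (J i (ψ i))]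
    · have hb := hoff i j hij (ψ j) (ψ i)
      have hre : -(‖(a i j (ψ j) (ψ i) : ℂ)‖) ≤ (a i j (ψ j) (ψ i)).re := by
        have := Complex.abs_re_le_norm (a i j (ψ j) (ψ i))
        linarith [(abs_le.1 this).1]
      linarith
  -- sum over rows
  have hinnerT : HasSum (fun i => T v i * ‖ψ i‖) ((inner ℝ (T v) v : ℝ)) := by
    have hs := (lp.summable_inner (𝕜 := ℝ) (T v) v).hasSum
    rw [← lp.inner_eq_tsum] at hs
    simpa [hvc, RCLike.inner_apply, starRingEnd_apply, mul_comm] using hs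
  have hinnerW : HasSum (fun i => W w i * ‖J i (ψ i)‖) ((inner ℝ (W w) w : ℝ)) := by
    have hs := (lp.summable_inner (𝕜 := ℝ) (W w) w).hasSum
    rw [← lp.inner_eq_tsum] at hs
    simpa [hwc, RCLike.inner_apply, starRingEnd_apply, mul_comm] using hs
  have hmain : (inner ℝ (T v) v : ℝ) - (inner ℝ (W w) w : ℝ) ≤ S.re :=
    hasSum_le hrow (hinnerT.sub hinnerW) hS
  -- coercivity and boundedness
  have hcoer : c * ‖ψ‖ ^ 2 ≤ (inner ℝ (T v) v : ℝ) := by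
    have := hTcoer v
    rwa [hvnorm] at this
  have hWbound : (inner ℝ (W w) w : ℝ) ≤ ‖W‖ * ∑' i, ‖J i (ψ i)‖ ^ 2 := by
    have h1 : (inner ℝ (W w) w : ℝ) ≤ ‖W w‖ * ‖w‖ := real_inner_le_norm (W w) w
    have h2 : ‖W w‖ ≤ ‖W‖ * ‖w‖ := W.le_opNorm w
    have h3 : ‖W w‖ * ‖w‖ ≤ (‖W‖ * ‖w‖) * ‖w‖ :=
      mul_le_mul_of_nonneg_right h2 (norm_nonneg _)
    calc (inner ℝ (W w) w : ℝ) ≤ (‖W‖ * ‖w‖) * ‖w‖ := le_trans h1 h3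
      _ = ‖W‖ * ‖w‖ ^ 2 := by ring
      _ = ‖W‖ * ∑' i, ‖J i (ψ i)‖ ^ 2 := by rw [hwnorm]
  linarith
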